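/- Let {X_t}_{t=1}^T be a Markov chain on 𝒳, let S₁ be independent of X^T, let the battery dynamics S_{t+1} = S_t + Y_t − X_t hold, and suppose that for each t the conditional law of Y_t given (S₁, X^T, Y^{t−1}) depends only on (X_t, S_t, Y^{t−1}) (a policy in the class Q_B). Then equality holds: I(S₁, X^T; Y^T) = Σ_{t=1}^{T} I(X_t, S_t; Y_t | Y^{t−1}). -/

import Mathlib

open Finset
open scoped Classical

namespace SmartMeter

/-! ### Basic information measures for finitely supported distributions.
All entropies and mutual informations are in bits (base-2 logarithms). -/

/-- Probability that the random variable `Z` takes the value `z` under the pmf `p`. -/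
noncomputable def pr {Ω α : Type*} [Fintype Ω] [DecidableEq α]
    (p : Ω → ℝ) (Z : Ω → α) (z : α) : ℝ :=
  ∑ ω ∈ Finset.univ.filter (fun ω => Z ω = z), p ω

/-- Shannon entropy (in bits) of the random variable `Z` under the pmf `p`. -/
noncomputable def ent {Ω α : Type*} [Fintype Ω] [DecidableEq α]
    (p : Ω → ℝ) (Z : Ω → α) : ℝ :=
  -∑ z ∈ Finset.univ.image Z, pr p Z z * Real.logb 2 (pr p Z z)

/-- Mutual information `I(A; B)`. -/
noncomputable def mutInfo {Ω α β : Type*} [Fintype Ω] [DecidableEq α] [DecidableEq β]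
    (p : Ω → ℝ) (A : Ω → α) (B : Ω → β) : ℝ :=
  ent p A + ent p B - ent p (fun ω => (A ω, B ω))

/-- Conditional entropy `H(A | C)`. -/
noncomputable def condEnt {Ω α γ : Type*} [Fintype Ω] [DecidableEq α] [DecidableEq γ]
    (p : Ω → ℝ) (A : Ω → α) (C : Ω → γ) : ℝ :=
  ent p (fun ω => (A ω, C ω)) - ent p C

/-- Conditional mutual information `I(A; B | C)`. -/
noncomputable def condMutInfo {Ω α β γ : Type*} [Fintype Ω] [DecidableEq α] [DecidableEq β]
    [DecidableEq γ] (p : Ω → ℝ) (A : Ω → α) (B : Ω → β) (C : Ω → γ) : ℝ :=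
  ent p (fun ω => (A ω, C ω)) + ent p (fun ω => (B ω, C ω))
    - ent p (fun ω => (A ω, B ω, C ω)) - ent p C

/-- `p` is a probability mass function on the finite type `Ω`. -/
def IsPMF {Ω : Type*} [Fintype Ω] (p : Ω → ℝ) : Prop :=
  (∀ ω, 0 ≤ p ω) ∧ ∑ ω, p ω = 1

/-- Extension of a pmf on `{0, …, n}` to an integer-indexed function (zero out of range). -/
noncomputable def extZ {n : ℕ} (f : Fin (n + 1) → ℝ) (k : ℤ) : ℝ :=
  if h : 0 ≤ k ∧ k ≤ (n : ℤ) then f ⟨k.toNat, by omega⟩ else 0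

/-! ### The single-letter quantity `J*` -/

/-- `I(S - X; X)` for independent `X ~ PX` on `{0,…,mx}` and `S ~ θ` on `{0,…,ms}`. -/
noncomputable def iidMI (mx ms : ℕ) (PX : Fin (mx + 1) → ℝ) (θ : Fin (ms + 1) → ℝ) : ℝ :=
  mutInfo (fun ω : Fin (mx + 1) × Fin (ms + 1) => PX ω.1 * θ ω.2)
    (fun ω => ((ω.2 : ℕ) : ℤ) - ((ω.1 : ℕ) : ℤ)) (fun ω => ω.1)

/-- `J* = min over pmfs θ on 𝒮 of I(S - X; X)`. -/
noncomputable def Jstar (mx ms : ℕ) (PX : Fin (mx + 1) → ℝ) : ℝ :=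
  sInf {r : ℝ | ∃ θ : Fin (ms + 1) → ℝ, IsPMF θ ∧ iidMI mx ms PX θ = r}

/-! ### The structured policy `b*` -/

/-- `ξ(w) = Σ_{(x,s) : s - x = w} PX(x) θ(s)`, the pmf of `W = S - X`. -/
noncomputable def xiOf (mx ms : ℕ) (PX : Fin (mx + 1) → ℝ) (θ : Fin (ms + 1) → ℝ)
    (w : ℤ) : ℝ :=
  ∑ x : Fin (mx + 1), ∑ s : Fin (ms + 1),
    if ((s : ℕ) : ℤ) - ((x : ℕ) : ℤ) = w then PX x * θ s else 0

/-- The structured policy with respect to `(θ, ξ)`: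
`b(y|w) = PX(y) θ(y + w) / ξ(w)` for `y ∈ 𝒳 ∩ 𝒴₀(w)` (when `ξ(w) > 0`), else `0`. -/
noncomputable def bstar (mx my ms : ℕ) (PX : Fin (mx + 1) → ℝ) (θ : Fin (ms + 1) → ℝ)
    (w : ℤ) (y : Fin (my + 1)) : ℝ :=
  if xiOf mx ms PX θ w = 0 then 0
  else extZ PX ((y : ℕ) : ℤ) * extZ θ (((y : ℕ) : ℤ) + w) / xiOf mx ms PX θ w

/-! ### Trajectory spaces, policies and induced joint laws.
Time is indexed from `0`; `ω = (s₁, x, y)` records the initial battery state `S₁ = ω.1`,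
the demands `X_{t+1} = ω.2.1 t` and the outputs `Y_{t+1} = ω.2.2 t` for `t = 0, …, T-1`. -/

/-- Trajectories of horizon `T`. -/
abbrev Traj (mx my ms T : ℕ) :=
  Fin (ms + 1) × (Fin T → Fin (mx + 1)) × (Fin T → Fin (my + 1))

variable {mx my ms T : ℕ}

/-- Demand at (0-based) time `t`, as an integer (junk value `0` for `t ≥ T`). -/
def Xat (ω : Traj mx my ms T) (t : ℕ) : ℤ :=
  if h : t < T then ((ω.2.1 ⟨t, h⟩ : ℕ) : ℤ) else 0

/-- Output at (0-based) time `t`, as an integer (junk value `0` for `t ≥ T`). -/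
def Yat (ω : Traj mx my ms T) (t : ℕ) : ℤ :=
  if h : t < T then ((ω.2.2 ⟨t, h⟩ : ℕ) : ℤ) else 0

/-- Battery state at (0-based) time `t`: `S_{t+1} = S_t + Y_t - X_t`, `Sat ω 0 = S₁`. -/
def Sat (ω : Traj mx my ms T) (t : ℕ) : ℤ :=
  ((ω.1 : ℕ) : ℤ) + ∑ i ∈ Finset.range t, (Yat ω i - Xat ω i)

/-- `W_t = S_t - X_t`. -/
def Wat (ω : Traj mx my ms T) (t : ℕ) : ℤ := Sat ω t - Xat ω t

/-- A general causal (class `Q_A`) randomized battery policy: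
`q_t(y_t | x^t, s^t, y^{t-1})`; since `s^t` is determined by `(s₁, x^{t-1}, y^{t-1})`,
the policy is a function of `(x^t, s₁, y^{t-1})`. -/
def PolicyA (mx my ms : ℕ) : Type :=
  (t : ℕ) → (Fin (t + 1) → Fin (mx + 1)) → Fin (ms + 1) → (Fin t → Fin (my + 1)) →
    Fin (my + 1) → ℝ

/-- A class-`Q_B` policy: `q_t(y_t | x_t, s_t, y^{t-1})`. -/
def PolicyB (mx my ms : ℕ) : Type :=
  (t : ℕ) → Fin (mx + 1) → ℤ → (Fin t → Fin (my + 1)) → Fin (my + 1) → ℝ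

/-- The battery state `S_t` computed from `s₁` and the history `(x^t, y^{t-1})`. -/
def hstate {t : ℕ} (s1 : Fin (ms + 1)) (x : Fin (t + 1) → Fin (mx + 1))
    (y : Fin t → Fin (my + 1)) : ℤ :=
  ((s1 : ℕ) : ℤ) + ∑ i : Fin t, (((y i : ℕ) : ℤ) - ((x i.castSucc : ℕ) : ℤ))

/-- Each `q_t(· | x^t, s^t, y^{t-1})` is a pmf on `𝒴`. -/
def CondPMFA (q : PolicyA mx my ms) : Prop :=
  ∀ (t : ℕ) (x : Fin (t + 1) → Fin (mx + 1)) (s1 : Fin (ms + 1)) (y : Fin t → Fin (my + 1)),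
    (∀ yt, 0 ≤ q t x s1 y yt) ∧ ∑ yt, q t x s1 y yt = 1

/-- Feasibility of a class-`Q_A` policy: conditional pmfs supported on
`𝒴₀(s_t - x_t) = {y ∈ 𝒴 : s_t - x_t + y ∈ 𝒮}`. -/
def FeasibleA (q : PolicyA mx my ms) : Prop :=
  CondPMFA q ∧
  ∀ (t : ℕ) (x : Fin (t + 1) → Fin (mx + 1)) (s1 : Fin (ms + 1)) (y : Fin t → Fin (my + 1)),
    ∀ yt, q t x s1 y yt ≠ 0 →
      0 ≤ hstate s1 x y - ((x (Fin.last t) : ℕ) : ℤ) + ((yt : ℕ) : ℤ) ∧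
      hstate s1 x y - ((x (Fin.last t) : ℕ) : ℤ) + ((yt : ℕ) : ℤ) ≤ (ms : ℤ)

/-- Each `q_t(· | x_t, s_t, y^{t-1})` is a pmf on `𝒴`. -/
def CondPMFB (q : PolicyB mx my ms) : Prop :=
  ∀ (t : ℕ) (xt : Fin (mx + 1)) (s : ℤ) (y : Fin t → Fin (my + 1)),
    (∀ yt, 0 ≤ q t xt s y yt) ∧ ∑ yt, q t xt s y yt = 1

/-- Feasibility of a class-`Q_B` policy. -/
def FeasibleB (q : PolicyB mx my ms) : Prop :=
  CondPMFB q ∧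
  ∀ (t : ℕ) (xt : Fin (mx + 1)) (s : ℤ) (y : Fin t → Fin (my + 1)),
    0 ≤ s → s ≤ (ms : ℤ) →
    ∀ yt, q t xt s y yt ≠ 0 →
      0 ≤ s - ((xt : ℕ) : ℤ) + ((yt : ℕ) : ℤ) ∧
      s - ((xt : ℕ) : ℤ) + ((yt : ℕ) : ℤ) ≤ (ms : ℤ)

/-- The demand prefix `x^t = (x_0, …, x_t)` of a trajectory. -/
def prefX (ω : Traj mx my ms T) (t : Fin T) : Fin ((t : ℕ) + 1) → Fin (mx + 1) :=
  fun i => ω.2.1 ⟨(i : ℕ), lt_of_le_of_lt (Nat.lt_succ_iff.mp i.isLt) t.isLt⟩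

/-- The output prefix `y^{t-1} = (y_0, …, y_{t-1})` of a trajectory. -/
def prefY (ω : Traj mx my ms T) (t : Fin T) : Fin (t : ℕ) → Fin (my + 1) :=
  fun i => ω.2.2 ⟨(i : ℕ), i.isLt.trans t.isLt⟩

/-- Joint law on trajectories induced by i.i.d. demand `PX`, initial battery pmf `PS1`
(independent of the demand), and a class-`Q_A` policy `q`. -/
noncomputable def jointA (PS1 : Fin (ms + 1) → ℝ) (PX : Fin (mx + 1) → ℝ)
    (q : PolicyA mx my ms) (T : ℕ) (ω : Traj mx my ms T) : ℝ :=
  PS1 ω.1 * ∏ t : Fin T,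
    (PX (ω.2.1 t) * q (t : ℕ) (prefX ω t) ω.1 (prefY ω t) (ω.2.2 t))

/-- Weight of a demand trajectory under a Markov chain `(PX1, Qm)`. -/
noncomputable def markovWt (PX1 : Fin (mx + 1) → ℝ) (Qm : Fin (mx + 1) → Fin (mx + 1) → ℝ)
    {T : ℕ} (x : Fin T → Fin (mx + 1)) : ℝ :=
  ∏ t : Fin T,
    if _h : (t : ℕ) = 0 then PX1 (x t)
    else Qm (x ⟨(t : ℕ) - 1, lt_of_le_of_lt (Nat.sub_le _ _) t.isLt⟩) (x t)

/-- Joint law on trajectories induced by Markov demand and a class-`Q_A` policy. -/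
noncomputable def jointAMarkov (PS1 : Fin (ms + 1) → ℝ) (PX1 : Fin (mx + 1) → ℝ)
    (Qm : Fin (mx + 1) → Fin (mx + 1) → ℝ) (q : PolicyA mx my ms) (T : ℕ)
    (ω : Traj mx my ms T) : ℝ :=
  PS1 ω.1 * markovWt PX1 Qm ω.2.1 *
    ∏ t : Fin T, q (t : ℕ) (prefX ω t) ω.1 (prefY ω t) (ω.2.2 t)

/-- Joint law on trajectories induced by Markov demand and a class-`Q_B` policy. -/
noncomputable def jointBMarkov (PS1 : Fin (ms + 1) → ℝ) (PX1 : Fin (mx + 1) → ℝ)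
    (Qm : Fin (mx + 1) → Fin (mx + 1) → ℝ) (q : PolicyB mx my ms) (T : ℕ)
    (ω : Traj mx my ms T) : ℝ :=
  PS1 ω.1 * markovWt PX1 Qm ω.2.1 *
    ∏ t : Fin T, q (t : ℕ) (ω.2.1 t) (Sat ω (t : ℕ)) (prefY ω t) (ω.2.2 t)

/-- The memoryless time-invariant policy `q_t(y | x, s) = b*(y | s - x)`, as a member of the
class of general causal policies. -/
noncomputable def structuredPolicyA (mx my ms : ℕ) (PX : Fin (mx + 1) → ℝ)
    (θ : Fin (ms + 1) → ℝ) : PolicyA mx my ms :=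
  fun t x s1 y yt => bstar mx my ms PX θ (hstate s1 x y - ((x (Fin.last t) : ℕ) : ℤ)) yt


/-! Auxiliary lemmas -/
variable {mx my ms T : ℕ}

lemma pr_congr {Ω α β : Type*} [Fintype Ω] [DecidableEq α] [DecidableEq β]
    (p : Ω → ℝ) (A : Ω → α) (B : Ω → β) (ω : Ω)
    (h : ∀ ω', A ω' = A ω ↔ B ω' = B ω) :
    pr p A (A ω) = pr p B (B ω) := by
  unfold pr
  congr 1
  ext ω'
  simp [h ω']

lemma ent_eq_sum {Ω α : Type*} [Fintype Ω] [DecidableEq α] (p : Ω → ℝ) (Z : Ω → α) :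
    ent p Z = -∑ ω, p ω * Real.logb 2 (pr p Z (Z ω)) := by
  unfold ent
  congr 1
  rw [← Finset.sum_fiberwise_of_maps_to (g := Z) (t := Finset.univ.image Z)
      (fun x _ => Finset.mem_image_of_mem Z (Finset.mem_univ x))
      (fun ω => p ω * Real.logb 2 (pr p Z (Z ω)))]
  refine Finset.sum_congr rfl fun z hz => ?_
  conv_lhs => rw [pr, Finset.sum_mul]
  refine Finset.sum_congr rfl fun ω hω => ?_
  rw [(Finset.mem_filter.mp hω).2]; rfl

lemma pr_pos {Ω α : Type*} [Fintype Ω] [DecidableEq α] (p : Ω → ℝ)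
    (hp : ∀ ω, 0 ≤ p ω) (Z : Ω → α) (ω : Ω) (hω : p ω ≠ 0) :
    0 < pr p Z (Z ω) := by
  have h1 : 0 < p ω := lt_of_le_of_ne (hp ω) (Ne.symm hω)
  refine lt_of_lt_of_le h1 ?_
  refine Finset.single_le_sum (fun i _ => hp i) ?_
  simp

lemma pr_nonneg {Ω α : Type*} [Fintype Ω] [DecidableEq α] (p : Ω → ℝ)
    (hp : ∀ ω, 0 ≤ p ω) (Z : Ω → α) (z : α) : 0 ≤ pr p Z z :=
  Finset.sum_nonneg fun i _ => hp i

lemma sum_prod_prefix {K : Type*} [Fintype K] {n : ℕ}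
    (F : Fin n → (Fin n → K) → ℝ)
    (hdep : ∀ (i : Fin n) (y y' : Fin n → K), (∀ j, j ≤ i → y j = y' j) → F i y = F i y')
    (hnorm : ∀ (i : Fin n) (y : Fin n → K), ∑ c, F i (Function.update y i c) = 1) :
    ∀ (m t : ℕ), t + m = n → ∀ (y₀ : Fin n → K),
    ∑ y ∈ Finset.univ.filter (fun y : Fin n → K => ∀ j : Fin n, (j : ℕ) < t → y j = y₀ j),
        ∏ i, F i y
      = ∏ i ∈ Finset.univ.filter (fun i : Fin n => (i : ℕ) < t), F i y₀ := by
  intro m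
  induction m with
  | zero =>
    intro t ht y₀
    have h1 : Finset.univ.filter (fun y : Fin n → K => ∀ j : Fin n, (j : ℕ) < t → y j = y₀ j)
        = {y₀} := by
      ext y
      simp only [Finset.mem_filter, Finset.mem_univ, true_and, Finset.mem_singleton]
      constructor
      · intro h; funext j; exact h j (by omega)
      · intro h j _; rw [h]
    have h2 : Finset.univ.filter (fun i : Fin n => (i : ℕ) < t) = Finset.univ := by
      ext i; simp; omega
    rw [h1, h2, Finset.sum_singleton]
  | succ m ih =>
    intro t ht y₀
    have htn : t < n := by omega
    set tt : Fin n := ⟨t, htn⟩ with htt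
    rw [← Finset.sum_fiberwise_of_maps_to (g := fun y : Fin n → K => y tt)
        (t := (Finset.univ : Finset K)) (fun x _ => Finset.mem_univ _) _]
    have hfib : ∀ c : K,
        (Finset.univ.filter (fun y : Fin n → K => ∀ j : Fin n, (j : ℕ) < t → y j = y₀ j)).filter
          (fun y => y tt = c)
        = Finset.univ.filter
            (fun y : Fin n → K => ∀ j : Fin n, (j : ℕ) < t + 1 → y j = Function.update y₀ tt c j) := by
      intro c
      ext y
      simp only [Finset.mem_filter, Finset.mem_univ, true_and]
      constructor
      · rintro ⟨h1, h2⟩ j hj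
        rcases Nat.lt_succ_iff_lt_or_eq.mp hj with hj' | hj'
        · have hne : j ≠ tt := by
            have hv : (j : ℕ) ≠ t := by omega
            exact fun h => hv (by rw [h])
          rw [h1 j hj', Function.update_of_ne hne]
        · have hje : j = tt := by
            apply Fin.ext
            simpa using hj'
          rw [hje, h2, Function.update_self]
      · intro h
        constructor
        · intro j hj
          have hne : j ≠ tt := by
            have hv : (j : ℕ) ≠ t := by omega
            exact fun h => hv (by rw [h])
          have := h j (by omega)
          rwa [Function.update_of_ne hne] at this
        · have := h tt (Nat.lt_succ_self t)
          rwa [Function.update_self] at this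
    calc ∑ c : K, ∑ y ∈ (Finset.univ.filter
            (fun y : Fin n → K => ∀ j : Fin n, (j : ℕ) < t → y j = y₀ j)).filter
            (fun y => y tt = c), ∏ i, F i y
        = ∑ c : K, ∏ i ∈ Finset.univ.filter (fun i : Fin n => (i : ℕ) < t + 1),
            F i (Function.update y₀ tt c) := by
          refine Finset.sum_congr rfl fun c _ => ?_
          rw [hfib c, ih (t + 1) (by omega)]
      _ = ∏ i ∈ Finset.univ.filter (fun i : Fin n => (i : ℕ) < t), F i y₀ := by
          have hins : Finset.univ.filter (fun i : Fin n => (i : ℕ) < t + 1)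
              = insert tt (Finset.univ.filter (fun i : Fin n => (i : ℕ) < t)) := by
            ext i
            simp only [Finset.mem_filter, Finset.mem_univ, true_and, Finset.mem_insert]
            constructor
            · intro h
              rcases Nat.lt_succ_iff_lt_or_eq.mp h with h' | h'
              · right; exact h'
              · left; exact Fin.ext h'
            · rintro (h | h)
              · subst h; exact Nat.lt_succ_self t
              · omega
          have hnm : tt ∉ Finset.univ.filter (fun i : Fin n => (i : ℕ) < t) := by
            simp [htt]
          have hre : ∀ c : K, ∏ i ∈ Finset.univ.filter (fun i : Fin n => (i : ℕ) < t),
              F i (Function.update y₀ tt c) =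
              ∏ i ∈ Finset.univ.filter (fun i : Fin n => (i : ℕ) < t), F i y₀ := by
            intro c
            refine Finset.prod_congr rfl fun i hi => ?_
            simp only [Finset.mem_filter] at hi
            refine hdep i _ _ fun j hj => ?_
            refine Function.update_of_ne ?_ _ _
            have hv : (j : ℕ) < t := lt_of_le_of_lt hj hi.2
            have hv2 : (j : ℕ) ≠ t := by omega
            exact fun h => hv2 (by rw [h])
          simp only [hins, Finset.prod_insert hnm, hre]
          rw [← Finset.sum_mul, hnorm tt y₀, one_mul]

lemma pr_group {Ω γ β : Type*} [Fintype Ω] [DecidableEq γ] [DecidableEq β]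
    (p : Ω → ℝ) (V : Ω → γ) (W : Ω → β) (b : β) :
    pr p W b = ∑ v ∈ Finset.univ.image V,
      ∑ ω ∈ (Finset.univ.filter (fun ω => W ω = b)).filter (fun ω => V ω = v), p ω := by
  rw [pr, Finset.sum_fiberwise_of_maps_to]
  intro x _
  exact Finset.mem_image_of_mem V (Finset.mem_univ x)

lemma pr_kernel {Ω γ β ζ : Type*} [Fintype Ω] [DecidableEq γ] [DecidableEq β] [DecidableEq ζ]
    (p : Ω → ℝ) (V : Ω → γ) (g : γ → β) (κ : β → ζ → ℝ) (Z : Ω → ζ)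
    (h : ∀ (ω' : Ω) (z : ζ),
      pr p (fun ω'' => (V ω'', Z ω'')) (V ω', z) = pr p V (V ω') * κ (g (V ω')) z)
    (ω : Ω) (z : ζ) :
    pr p (fun ω'' => (g (V ω''), Z ω'')) (g (V ω), z)
      = pr p (fun ω'' => g (V ω'')) (g (V ω)) * κ (g (V ω)) z := by
  set b := g (V ω) with hb
  have claim1 : pr p (fun ω'' => (g (V ω''), Z ω'')) (b, z)
      = ∑ v ∈ Finset.univ.image V,
          if g v = b then pr p (fun ω'' => (V ω'', Z ω'')) (v, z) else 0 := by
    rw [pr_group p V _ (b, z)]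
    refine Finset.sum_congr rfl fun v hv => ?_
    by_cases hgv : g v = b
    · rw [if_pos hgv, pr]
      congr 1
      ext ω'
      simp only [Finset.mem_filter, Finset.mem_univ, true_and, Prod.mk.injEq]
      constructor
      · rintro ⟨⟨h1, h2⟩, h3⟩; exact ⟨h3, h2⟩
      · rintro ⟨h1, h2⟩; exact ⟨⟨by rw [h1, hgv], h2⟩, h1⟩
    · rw [if_neg hgv]
      apply Finset.sum_eq_zero
      intro ω' hω'
      simp only [Finset.mem_filter, Finset.mem_univ, true_and, Prod.mk.injEq] at hω'
      exact absurd (hω'.2 ▸ hω'.1.1) hgv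
  have claim2 : pr p (fun ω'' => g (V ω'')) b
      = ∑ v ∈ Finset.univ.image V, if g v = b then pr p V v else 0 := by
    rw [pr_group p V _ b]
    refine Finset.sum_congr rfl fun v hv => ?_
    by_cases hgv : g v = b
    · rw [if_pos hgv, pr]
      congr 1
      ext ω'
      simp only [Finset.mem_filter, Finset.mem_univ, true_and]
      constructor
      · rintro ⟨h1, h2⟩; exact h2
      · rintro h1; exact ⟨by rw [h1, hgv], h1⟩
    · rw [if_neg hgv]
      apply Finset.sum_eq_zero
      intro ω' hω'
      simp only [Finset.mem_filter, Finset.mem_univ, true_and] at hω'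
      exact absurd (hω'.2 ▸ hω'.1) hgv
  rw [claim1, claim2, Finset.sum_mul]
  refine Finset.sum_congr rfl fun v hv => ?_
  by_cases hgv : g v = b
  · rw [if_pos hgv, if_pos hgv]
    obtain ⟨ω₀, _, hω₀⟩ := Finset.mem_image.mp hv
    rw [← hω₀, h ω₀ z, hω₀, hgv]
  · rw [if_neg hgv, if_neg hgv, zero_mul]

/-- The `q`-factor at time `i` in the class-B joint law. -/
noncomputable def qterm (q : PolicyB mx my ms) (i : Fin T) (ω : Traj mx my ms T) : ℝ :=
  q (i : ℕ) (ω.2.1 i) (Sat ω (i : ℕ)) (prefY ω i) (ω.2.2 i)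

lemma jointBMarkov_eq (PS1 : Fin (ms + 1) → ℝ) (PX1 : Fin (mx + 1) → ℝ)
    (Qm : Fin (mx + 1) → Fin (mx + 1) → ℝ) (q : PolicyB mx my ms) (ω : Traj mx my ms T) :
    jointBMarkov PS1 PX1 Qm q T ω
      = PS1 ω.1 * markovWt PX1 Qm ω.2.1 * ∏ i : Fin T, qterm q i ω := rfl

/-- The first `t` outputs (as integers). -/
def Cfun (t : ℕ) (ω : Traj mx my ms T) : Fin t → ℤ := fun i => Yat ω (i : ℕ)

/-- `(S₁, X^T, Y^{t-1})`. -/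
def Vfun (t : ℕ) (ω : Traj mx my ms T) :
    Fin (ms + 1) × (Fin T → Fin (mx + 1)) × (Fin t → ℤ) := (ω.1, ω.2.1, Cfun t ω)

lemma Yat_eq (ω : Traj mx my ms T) (i : ℕ) (h : i < T) :
    Yat ω i = ((ω.2.2 ⟨i, h⟩ : ℕ) : ℤ) := dif_pos h

lemma Xat_eq (ω : Traj mx my ms T) (i : ℕ) (h : i < T) :
    Xat ω i = ((ω.2.1 ⟨i, h⟩ : ℕ) : ℤ) := dif_pos h

/-- `Sat` only depends on the initial state, demands, and outputs before time `t`. -/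
lemma Sat_congr (ω ω' : Traj mx my ms T) (t : ℕ) (ht : t ≤ T)
    (h1 : ω.1 = ω'.1) (h2 : ω.2.1 = ω'.2.1)
    (h3 : ∀ j : Fin T, (j : ℕ) < t → ω.2.2 j = ω'.2.2 j) :
    Sat ω t = Sat ω' t := by
  unfold Sat
  rw [h1]
  congr 1
  refine Finset.sum_congr rfl fun k hk => ?_
  have hkt : k < T := lt_of_lt_of_le (Finset.mem_range.mp hk) ht
  rw [Yat_eq ω k hkt, Yat_eq ω' k hkt, Xat_eq ω k hkt, Xat_eq ω' k hkt, h2,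
    h3 ⟨k, hkt⟩ (Finset.mem_range.mp hk)]

lemma prefY_congr (ω ω' : Traj mx my ms T) (t : Fin T)
    (h3 : ∀ j : Fin T, (j : ℕ) < (t : ℕ) → ω.2.2 j = ω'.2.2 j) :
    prefY ω t = prefY ω' t := by
  funext i
  exact h3 ⟨(i : ℕ), i.isLt.trans t.isLt⟩ i.isLt

lemma qterm_congr (q : PolicyB mx my ms) (i : Fin T) (ω ω' : Traj mx my ms T)
    (h1 : ω.1 = ω'.1) (h2 : ω.2.1 = ω'.2.1)
    (h3 : ∀ j : Fin T, (j : ℕ) ≤ (i : ℕ) → ω.2.2 j = ω'.2.2 j) :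
    qterm q i ω = qterm q i ω' := by
  unfold qterm
  rw [h2, Sat_congr ω ω' (i : ℕ) (le_of_lt i.isLt) h1 h2 (fun j hj => h3 j (le_of_lt hj)),
    prefY_congr ω ω' i (fun j hj => h3 j (le_of_lt hj)), h3 i (le_refl _)]


lemma Vfun_eq_iff (t : ℕ) (ht : t ≤ T) (ω : Traj mx my ms T)
    (a : Fin (ms + 1)) (x : Fin T → Fin (mx + 1)) (y : Fin T → Fin (my + 1)) :
    Vfun t ((a, x, y) : Traj mx my ms T) = Vfun t ω
      ↔ a = ω.1 ∧ x = ω.2.1 ∧ ∀ j : Fin T, (j : ℕ) < t → y j = ω.2.2 j := by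
  simp only [Vfun, Prod.mk.injEq]
  refine and_congr Iff.rfl (and_congr Iff.rfl ?_)
  constructor
  · intro h j hj
    have h2 := congrFun h ⟨(j : ℕ), hj⟩
    simp only [Cfun] at h2
    rw [Yat_eq _ _ j.isLt, Yat_eq _ _ j.isLt] at h2
    exact Fin.ext (by exact_mod_cast h2)
  · intro h
    funext i
    have hiT : (i : ℕ) < T := lt_of_lt_of_le i.isLt ht
    simp only [Cfun]
    rw [Yat_eq _ _ hiT, Yat_eq _ _ hiT]
    exact congrArg (fun c : Fin (my + 1) => ((c : ℕ) : ℤ)) (h ⟨(i : ℕ), hiT⟩ i.isLt)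

/-- Marginal of the joint law on `(S₁, X^T, Y^{t-1})`. -/
lemma F1 (PS1 : Fin (ms + 1) → ℝ) (PX1 : Fin (mx + 1) → ℝ)
    (Qm : Fin (mx + 1) → Fin (mx + 1) → ℝ) (q : PolicyB mx my ms) (hq : CondPMFB q)
    (t : ℕ) (ht : t ≤ T) (ω : Traj mx my ms T) :
    pr (jointBMarkov PS1 PX1 Qm q T) (Vfun t) (Vfun t ω)
      = PS1 ω.1 * markovWt PX1 Qm ω.2.1 *
          ∏ i ∈ Finset.univ.filter (fun i : Fin T => (i : ℕ) < t), qterm q i ω := by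
  classical
  set p := jointBMarkov PS1 PX1 Qm q T with hpdef
  calc pr p (Vfun t) (Vfun t ω)
      = ∑ ω' : Traj mx my ms T, if Vfun t ω' = Vfun t ω then p ω' else 0 := by
        rw [pr, Finset.sum_filter]
    _ = ∑ a : Fin (ms + 1), ∑ x : Fin T → Fin (mx + 1), ∑ y : Fin T → Fin (my + 1),
          if a = ω.1 then (if x = ω.2.1 then
            (if (∀ j : Fin T, (j : ℕ) < t → y j = ω.2.2 j) then p (a, x, y) else 0) else 0)
          else 0 := by
        rw [Fintype.sum_prod_type]
        refine Finset.sum_congr rfl fun a _ => ?_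
        rw [Fintype.sum_prod_type]
        refine Finset.sum_congr rfl fun x _ => ?_
        refine Finset.sum_congr rfl fun y _ => ?_
        have h1 := if_congr (Vfun_eq_iff t ht ω a x y)
          (rfl : jointBMarkov PS1 PX1 Qm q T (a, x, y) = jointBMarkov PS1 PX1 Qm q T (a, x, y))
          (rfl : (0 : ℝ) = 0)
        rw [hpdef]
        rw [h1, ite_and, ite_and]
    _ = ∑ y : Fin T → Fin (my + 1),
          if (∀ j : Fin T, (j : ℕ) < t → y j = ω.2.2 j) then p (ω.1, ω.2.1, y) else 0 := by
        simp only [Finset.sum_ite_irrel, Finset.sum_const_zero]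
        rw [Finset.sum_ite_eq' Finset.univ ω.1]
        simp only [Finset.mem_univ, if_true]
        rw [Finset.sum_ite_eq' Finset.univ ω.2.1]
        simp only [Finset.mem_univ, if_true]
    _ = PS1 ω.1 * markovWt PX1 Qm ω.2.1 *
          ∑ y ∈ Finset.univ.filter (fun y : Fin T → Fin (my + 1) =>
              ∀ j : Fin T, (j : ℕ) < t → y j = ω.2.2 j),
            ∏ i : Fin T, qterm q i ((ω.1, ω.2.1, y) : Traj mx my ms T) := by
        rw [← Finset.sum_filter, Finset.mul_sum]
        refine Finset.sum_congr rfl fun y _ => ?_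
        rw [hpdef, jointBMarkov_eq]
    _ = PS1 ω.1 * markovWt PX1 Qm ω.2.1 *
          ∏ i ∈ Finset.univ.filter (fun i : Fin T => (i : ℕ) < t), qterm q i ω := by
        congr 1
        have := sum_prod_prefix
          (fun (i : Fin T) (y : Fin T → Fin (my + 1)) =>
            qterm q i ((ω.1, ω.2.1, y) : Traj mx my ms T))
          (fun i y y' hyy => qterm_congr q i _ _ rfl rfl (fun j hj => hyy j hj))
          ?_ (T - t) t (by omega) ω.2.2
        · convert this using 2
          ext y
          simp
        · intro i y
          have hSat : ∀ c, Sat ((ω.1, ω.2.1, Function.update y i c) : Traj mx my ms T) (i : ℕ)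
              = Sat ((ω.1, ω.2.1, y) : Traj mx my ms T) (i : ℕ) := by
            intro c
            refine Sat_congr _ _ _ (le_of_lt i.isLt) rfl rfl fun j hj => ?_
            refine Function.update_of_ne ?_ _ _
            exact fun h => absurd (congrArg Fin.val h) (by omega)
          have hpre : ∀ c, prefY ((ω.1, ω.2.1, Function.update y i c) : Traj mx my ms T) i
              = prefY ((ω.1, ω.2.1, y) : Traj mx my ms T) i := by
            intro c
            refine prefY_congr _ _ _ fun j hj => ?_
            refine Function.update_of_ne ?_ _ _
            exact fun h => absurd (congrArg Fin.val h) (by omega)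
          calc ∑ c, qterm q i ((ω.1, ω.2.1, Function.update y i c) : Traj mx my ms T)
              = ∑ c, q (i : ℕ) (ω.2.1 i) (Sat ((ω.1, ω.2.1, y) : Traj mx my ms T) (i : ℕ))
                  (prefY ((ω.1, ω.2.1, y) : Traj mx my ms T) i) c := by
                refine Finset.sum_congr rfl fun c _ => ?_
                unfold qterm
                rw [hSat c, hpre c]
                simp [Function.update_self]
            _ = 1 := (hq (i : ℕ) (ω.2.1 i) _ _).2
lemma prod_filter_succ (G : Fin T → ℝ) (t : ℕ) (ht : t < T) :
    ∏ i ∈ Finset.univ.filter (fun i : Fin T => (i : ℕ) < t + 1), G i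
      = (∏ i ∈ Finset.univ.filter (fun i : Fin T => (i : ℕ) < t), G i) * G ⟨t, ht⟩ := by
  have hins : Finset.univ.filter (fun i : Fin T => (i : ℕ) < t + 1)
      = insert (⟨t, ht⟩ : Fin T) (Finset.univ.filter (fun i : Fin T => (i : ℕ) < t)) := by
    ext i
    simp only [Finset.mem_filter, Finset.mem_univ, true_and, Finset.mem_insert]
    constructor
    · intro h
      rcases Nat.lt_succ_iff_lt_or_eq.mp h with h' | h'
      · right; exact h'
      · left; exact Fin.ext h'
    · rintro (h | h)
      · subst h; exact Nat.lt_succ_self t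
      · omega
  have hnm : (⟨t, ht⟩ : Fin T) ∉ Finset.univ.filter (fun i : Fin T => (i : ℕ) < t) := by
    simp
  rw [hins, Finset.prod_insert hnm, mul_comm]

lemma F1step (PS1 : Fin (ms + 1) → ℝ) (PX1 : Fin (mx + 1) → ℝ)
    (Qm : Fin (mx + 1) → Fin (mx + 1) → ℝ) (q : PolicyB mx my ms) (hq : CondPMFB q)
    (t : ℕ) (ht : t < T) (ω : Traj mx my ms T) :
    pr (jointBMarkov PS1 PX1 Qm q T) (Vfun (t + 1)) (Vfun (t + 1) ω)
      = pr (jointBMarkov PS1 PX1 Qm q T) (Vfun t) (Vfun t ω) * qterm q ⟨t, ht⟩ ω := by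
  rw [F1 PS1 PX1 Qm q hq (t + 1) (by omega) ω, F1 PS1 PX1 Qm q hq t (le_of_lt ht) ω,
    prod_filter_succ _ t ht]
  ring

lemma qterm_norm (q : PolicyB mx my ms) (hq : CondPMFB q) (a : Fin (ms + 1))
    (x : Fin T → Fin (mx + 1)) (y : Fin T → Fin (my + 1)) (i : Fin T) :
    ∑ c, qterm q i ((a, x, Function.update y i c) : Traj mx my ms T) = 1 := by
  have hSat : ∀ c, Sat ((a, x, Function.update y i c) : Traj mx my ms T) (i : ℕ)
      = Sat ((a, x, y) : Traj mx my ms T) (i : ℕ) := by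
    intro c
    refine Sat_congr _ _ _ (le_of_lt i.isLt) rfl rfl fun j hj => ?_
    refine Function.update_of_ne ?_ _ _
    exact fun h => absurd (congrArg Fin.val h) (by omega)
  have hpre : ∀ c, prefY ((a, x, Function.update y i c) : Traj mx my ms T) i
      = prefY ((a, x, y) : Traj mx my ms T) i := by
    intro c
    refine prefY_congr _ _ _ fun j hj => ?_
    refine Function.update_of_ne ?_ _ _
    exact fun h => absurd (congrArg Fin.val h) (by omega)
  calc ∑ c, qterm q i ((a, x, Function.update y i c) : Traj mx my ms T)
      = ∑ c, q (i : ℕ) (x i) (Sat ((a, x, y) : Traj mx my ms T) (i : ℕ))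
          (prefY ((a, x, y) : Traj mx my ms T) i) c := by
        refine Finset.sum_congr rfl fun c _ => ?_
        unfold qterm
        rw [hSat c, hpre c]
        simp [Function.update_self]
    _ = 1 := (hq (i : ℕ) (x i) _ _).2

lemma sum_qprod_eq_one (q : PolicyB mx my ms) (hq : CondPMFB q) (a : Fin (ms + 1))
    (x : Fin T → Fin (mx + 1)) :
    ∑ y : Fin T → Fin (my + 1), ∏ i : Fin T, qterm q i ((a, x, y) : Traj mx my ms T) = 1 := by
  have h := sum_prod_prefix
    (fun (i : Fin T) (y : Fin T → Fin (my + 1)) => qterm q i ((a, x, y) : Traj mx my ms T))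
    (fun i y y' hyy => qterm_congr q i _ _ rfl rfl (fun j hj => hyy j hj))
    (fun i y => qterm_norm q hq a x y i) T 0 (by omega) (fun _ => ⟨0, Nat.succ_pos my⟩)
  have h1 : Finset.univ.filter (fun y : Fin T → Fin (my + 1) =>
      ∀ j : Fin T, (j : ℕ) < 0 → y j = (⟨0, Nat.succ_pos my⟩ : Fin (my + 1)))
      = Finset.univ := by
    apply Finset.filter_true_of_mem
    intro y _ j hj
    omega
  have h2 : Finset.univ.filter (fun i : Fin T => (i : ℕ) < 0) = ∅ := by
    apply Finset.filter_false_of_mem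
    intro i _
    omega
  rw [Finset.filter_true_of_mem (fun y _ j hj => absurd hj (Nat.not_lt_zero _)),
    Finset.filter_false_of_mem (fun i _ => Nat.not_lt_zero _), Finset.prod_empty] at h
  exact h

lemma markovWt_sum (PX1 : Fin (mx + 1) → ℝ) (hPX1 : IsPMF PX1)
    (Qm : Fin (mx + 1) → Fin (mx + 1) → ℝ) (hQm : ∀ x, IsPMF (Qm x)) :
    ∑ x : Fin T → Fin (mx + 1), markovWt PX1 Qm x = 1 := by
  have hdep : ∀ (i : Fin T) (y y' : Fin T → Fin (mx + 1)), (∀ j, j ≤ i → y j = y' j) →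
      (if _h : (i : ℕ) = 0 then PX1 (y i)
        else Qm (y ⟨(i : ℕ) - 1, lt_of_le_of_lt (Nat.sub_le _ _) i.isLt⟩) (y i))
      = (if _h : (i : ℕ) = 0 then PX1 (y' i)
        else Qm (y' ⟨(i : ℕ) - 1, lt_of_le_of_lt (Nat.sub_le _ _) i.isLt⟩) (y' i)) := by
    intro i y y' hyy
    by_cases h0 : (i : ℕ) = 0
    · rw [dif_pos h0, dif_pos h0, hyy i (le_refl _)]
    · rw [dif_neg h0, dif_neg h0, hyy i (le_refl _),
        hyy ⟨(i : ℕ) - 1, lt_of_le_of_lt (Nat.sub_le _ _) i.isLt⟩ (by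
          rw [Fin.le_def]; exact Nat.sub_le _ _)]
  have hnorm : ∀ (i : Fin T) (y : Fin T → Fin (mx + 1)),
      ∑ c, (if _h : (i : ℕ) = 0 then PX1 (Function.update y i c i)
        else Qm (Function.update y i c ⟨(i : ℕ) - 1, lt_of_le_of_lt (Nat.sub_le _ _) i.isLt⟩)
          (Function.update y i c i)) = 1 := by
    intro i y
    by_cases h0 : (i : ℕ) = 0
    · simp only [dif_pos h0, Function.update_self]
      exact hPX1.2
    · simp only [dif_neg h0, Function.update_self]
      have hne : (⟨(i : ℕ) - 1, lt_of_le_of_lt (Nat.sub_le _ _) i.isLt⟩ : Fin T) ≠ i := by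
        intro h
        have := congrArg Fin.val h
        simp at this
        omega
      simp only [Function.update_of_ne hne]
      exact (hQm _).2
  have h := sum_prod_prefix
    (fun (i : Fin T) (y : Fin T → Fin (mx + 1)) =>
      if _h : (i : ℕ) = 0 then PX1 (y i)
      else Qm (y ⟨(i : ℕ) - 1, lt_of_le_of_lt (Nat.sub_le _ _) i.isLt⟩) (y i))
    hdep hnorm T 0 (by omega) (fun _ => ⟨0, Nat.succ_pos mx⟩)
  have h1 : Finset.univ.filter (fun y : Fin T → Fin (mx + 1) =>
      ∀ j : Fin T, (j : ℕ) < 0 → y j = (⟨0, Nat.succ_pos mx⟩ : Fin (mx + 1)))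
      = Finset.univ := by
    apply Finset.filter_true_of_mem
    intro y _ j hj
    omega
  have h2 : Finset.univ.filter (fun i : Fin T => (i : ℕ) < 0) = ∅ := by
    apply Finset.filter_false_of_mem
    intro i _
    omega
  rw [Finset.filter_true_of_mem (fun y _ j hj => absurd hj (Nat.not_lt_zero _)),
    Finset.filter_false_of_mem (fun i _ => Nat.not_lt_zero _), Finset.prod_empty] at h
  exact h

lemma jointBMarkov_total (PS1 : Fin (ms + 1) → ℝ) (hPS1 : IsPMF PS1)
    (PX1 : Fin (mx + 1) → ℝ) (hPX1 : IsPMF PX1)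
    (Qm : Fin (mx + 1) → Fin (mx + 1) → ℝ) (hQm : ∀ x, IsPMF (Qm x))
    (q : PolicyB mx my ms) (hq : CondPMFB q) :
    ∑ ω : Traj mx my ms T, jointBMarkov PS1 PX1 Qm q T ω = 1 := by
  rw [Fintype.sum_prod_type]
  calc ∑ a : Fin (ms + 1), ∑ xy : (Fin T → Fin (mx + 1)) × (Fin T → Fin (my + 1)),
        jointBMarkov PS1 PX1 Qm q T (a, xy)
      = ∑ a : Fin (ms + 1), PS1 a * ∑ x : Fin T → Fin (mx + 1), markovWt PX1 Qm x := by
        refine Finset.sum_congr rfl fun a _ => ?_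
        rw [Fintype.sum_prod_type, Finset.mul_sum]
        refine Finset.sum_congr rfl fun x _ => ?_
        calc ∑ y : Fin T → Fin (my + 1), jointBMarkov PS1 PX1 Qm q T (a, x, y)
            = ∑ y : Fin T → Fin (my + 1), PS1 a * markovWt PX1 Qm x *
                ∏ i : Fin T, qterm q i ((a, x, y) : Traj mx my ms T) := rfl
          _ = PS1 a * markovWt PX1 Qm x *
              ∑ y : Fin T → Fin (my + 1), ∏ i : Fin T, qterm q i ((a, x, y) : Traj mx my ms T) := by
              rw [Finset.mul_sum]
          _ = PS1 a * markovWt PX1 Qm x := by rw [sum_qprod_eq_one q hq a x, mul_one]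
    _ = 1 := by
        rw [markovWt_sum PX1 hPX1 Qm hQm]
        simp only [mul_one]
        exact hPS1.2
/-- Clamp an integer into `Fin (n+1)`. -/
def toF (n : ℕ) (z : ℤ) : Fin (n + 1) := ⟨min z.toNat n, by omega⟩

lemma toF_coe (n : ℕ) (c : Fin (n + 1)) : toF n ((c : ℕ) : ℤ) = c := by
  apply Fin.ext
  simp only [toF, Int.toNat_natCast]
  exact min_eq_left (Nat.lt_succ_iff.mp c.isLt)

lemma toF_coe_int (n : ℕ) (z : ℤ) (h1 : 0 ≤ z) (h2 : z ≤ (n : ℤ)) :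
    ((toF n z : ℕ) : ℤ) = z := by
  simp only [toF]
  omega

lemma Vfun_succ_iff (t : ℕ) (ht : t < T) (ω₂ ω₃ : Traj mx my ms T) :
    Vfun (t + 1) ω₂ = Vfun (t + 1) ω₃
      ↔ Vfun t ω₂ = Vfun t ω₃ ∧ Yat ω₂ t = Yat ω₃ t := by
  simp only [Vfun, Prod.mk.injEq]
  constructor
  · rintro ⟨h1, h2, h3⟩
    refine ⟨⟨h1, h2, ?_⟩, ?_⟩
    · funext i
      exact congrFun h3 ⟨(i : ℕ), Nat.lt_succ_of_lt i.isLt⟩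
    · exact congrFun h3 ⟨t, Nat.lt_succ_self t⟩
  · rintro ⟨⟨h1, h2, h3⟩, h4⟩
    refine ⟨h1, h2, ?_⟩
    funext i
    rcases Nat.lt_succ_iff_lt_or_eq.mp i.isLt with h' | h'
    · exact congrFun h3 ⟨(i : ℕ), h'⟩
    · simpa only [Cfun, h'] using h4

/-- The "coarsening" map for the `Q_B` kernel. -/
def gmap (t : ℕ) (ht : t < T) :
    Fin (ms + 1) × (Fin T → Fin (mx + 1)) × (Fin t → ℤ) → (ℤ × ℤ) × (Fin t → ℤ) :=
  fun v => ((((v.2.1 ⟨t, ht⟩ : ℕ) : ℤ),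
    ((v.1 : ℕ) : ℤ) + ∑ i : Fin t, (v.2.2 i - ((v.2.1 ⟨(i : ℕ), lt_trans i.isLt ht⟩ : ℕ) : ℤ))),
    v.2.2)

lemma gmap_Vfun (t : ℕ) (ht : t < T) (ω : Traj mx my ms T) :
    gmap t ht (Vfun t ω) = ((Xat ω t, Sat ω t), Cfun t ω) := by
  simp only [gmap, Vfun]
  refine congrArg (fun z => (z, Cfun t ω)) ?_
  refine congrArg₂ Prod.mk (Xat_eq ω t ht).symm ?_
  unfold Sat
  congr 1
  rw [← Fin.sum_univ_eq_sum_range (fun i => Yat ω i - Xat ω i) t]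
  refine Finset.sum_congr rfl fun i _ => ?_
  simp only [Cfun]
  rw [Xat_eq ω (i : ℕ) (lt_trans i.isLt ht)]

/-- The `Q_B` kernel as a function of the coarse state. -/
noncomputable def kmap (q : PolicyB mx my ms) (t : ℕ) :
    (ℤ × ℤ) × (Fin t → ℤ) → ℤ → ℝ :=
  fun b z => if 0 ≤ z ∧ z ≤ (my : ℤ) then
    q t (toF mx b.1.1) b.1.2 (fun i => toF my (b.2 i)) (toF my z) else 0

lemma Yat_mem_range (ω : Traj mx my ms T) (t : ℕ) (ht : t < T) :
    0 ≤ Yat ω t ∧ Yat ω t ≤ (my : ℤ) := by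
  rw [Yat_eq ω t ht]
  have := (ω.2.2 ⟨t, ht⟩).isLt
  omega

lemma kmap_qterm (q : PolicyB mx my ms) (t : ℕ) (ht : t < T) (ω : Traj mx my ms T) :
    kmap q t (gmap t ht (Vfun t ω)) (Yat ω t) = qterm q ⟨t, ht⟩ ω := by
  rw [gmap_Vfun t ht ω, kmap, if_pos (Yat_mem_range ω t ht)]
  unfold qterm
  congr 1
  · rw [Xat_eq ω t ht]
    exact toF_coe mx _
  · funext i
    simp only [Cfun]
    rw [Yat_eq ω (i : ℕ) (lt_trans i.isLt ht)]
    exact toF_coe my _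
  · rw [Yat_eq ω t ht]
    exact toF_coe my _

/-- The key conditional-independence fact: the conditional law of `Y_t` given
`(S₁, X^T, Y^{t-1})` is the kernel `kmap` applied to the coarse state. -/
lemma F2aux (PS1 : Fin (ms + 1) → ℝ) (PX1 : Fin (mx + 1) → ℝ)
    (Qm : Fin (mx + 1) → Fin (mx + 1) → ℝ) (q : PolicyB mx my ms) (hq : CondPMFB q)
    (t : ℕ) (ht : t < T) (ω' : Traj mx my ms T) (z : ℤ) :
    pr (jointBMarkov PS1 PX1 Qm q T) (fun ω'' => (Vfun t ω'', Yat ω'' t)) (Vfun t ω', z)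
      = pr (jointBMarkov PS1 PX1 Qm q T) (Vfun t) (Vfun t ω')
          * kmap q t (gmap t ht (Vfun t ω')) z := by
  set p := jointBMarkov PS1 PX1 Qm q T with hpdef
  by_cases hz : 0 ≤ z ∧ z ≤ (my : ℤ)
  · -- z is a possible output value
    set c : Fin (my + 1) := toF my z with hc
    have hzc : ((c : ℕ) : ℤ) = z := toF_coe_int my z hz.1 hz.2
    set ω'' : Traj mx my ms T := (ω'.1, ω'.2.1, Function.update ω'.2.2 ⟨t, ht⟩ c) with hω''
    have hV : Vfun t ω'' = Vfun t ω' := by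
      simp only [Vfun, hω'', Prod.mk.injEq]
      refine ⟨trivial, trivial, ?_⟩
      funext i
      simp only [Cfun]
      rw [Yat_eq _ (i : ℕ) (lt_trans i.isLt ht), Yat_eq _ (i : ℕ) (lt_trans i.isLt ht)]
      have hne : (⟨(i : ℕ), lt_trans i.isLt ht⟩ : Fin T) ≠ ⟨t, ht⟩ := by
        intro h
        have := congrArg Fin.val h
        simp at this
        omega
      simp only [hω'']
      rw [Function.update_of_ne hne]
    have hZ : Yat ω'' t = z := by
      rw [Yat_eq _ t ht]
      simp only [hω'']
      rw [Function.update_self]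
      exact hzc
    calc pr p (fun ω₂ => (Vfun t ω₂, Yat ω₂ t)) (Vfun t ω', z)
        = pr p (fun ω₂ => (Vfun t ω₂, Yat ω₂ t)) ((fun ω₂ => (Vfun t ω₂, Yat ω₂ t)) ω'') := by
          rw [show (fun ω₂ => (Vfun t ω₂, Yat ω₂ t)) ω'' = (Vfun t ω'', Yat ω'' t) from rfl,
            hV, hZ]
      _ = pr p (Vfun (t + 1)) (Vfun (t + 1) ω'') := by
          refine pr_congr p _ _ ω'' fun ω₂ => ?_
          rw [Prod.mk.injEq, Vfun_succ_iff t ht ω₂ ω'']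
      _ = pr p (Vfun t) (Vfun t ω'') * qterm q ⟨t, ht⟩ ω'' := F1step PS1 PX1 Qm q hq t ht ω''
      _ = pr p (Vfun t) (Vfun t ω') * kmap q t (gmap t ht (Vfun t ω')) z := by
          rw [hV, ← kmap_qterm q t ht ω'', hV, hZ]
  · -- z is out of range: both sides vanish
    have hk : kmap q t (gmap t ht (Vfun t ω')) z = 0 := if_neg hz
    rw [hk, mul_zero, pr]
    apply Finset.sum_eq_zero
    intro ω₂ h₂
    exfalso
    rw [Finset.mem_filter] at h₂
    have := congrArg Prod.snd h₂.2
    simp only at this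
    exact hz (this ▸ Yat_mem_range ω₂ t ht)

/-- Conditional factorization over the coarse state `(X_t, S_t, Y^{t-1})`. -/
lemma F2 (PS1 : Fin (ms + 1) → ℝ) (PX1 : Fin (mx + 1) → ℝ)
    (Qm : Fin (mx + 1) → Fin (mx + 1) → ℝ) (q : PolicyB mx my ms) (hq : CondPMFB q)
    (t : ℕ) (ht : t < T) (ω : Traj mx my ms T) :
    pr (jointBMarkov PS1 PX1 Qm q T)
        (fun ω' => (((Xat ω' t, Sat ω' t), Cfun t ω'), Yat ω' t))
        (((Xat ω t, Sat ω t), Cfun t ω), Yat ω t)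
      = pr (jointBMarkov PS1 PX1 Qm q T)
          (fun ω' => ((Xat ω' t, Sat ω' t), Cfun t ω')) ((Xat ω t, Sat ω t), Cfun t ω)
          * qterm q ⟨t, ht⟩ ω := by
  have h := pr_kernel (jointBMarkov PS1 PX1 Qm q T) (Vfun t) (gmap t ht) (kmap q t)
    (fun ω' => Yat ω' t) (fun ω' z => F2aux PS1 PX1 Qm q hq t ht ω' z) ω (Yat ω t)
  rw [kmap_qterm q t ht ω] at h
  have hfun1 : (fun ω'' : Traj mx my ms T => (gmap t ht (Vfun t ω''), Yat ω'' t))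
      = fun ω' => (((Xat ω' t, Sat ω' t), Cfun t ω'), Yat ω' t) := by
    funext ω'
    rw [gmap_Vfun t ht ω']
  have hfun2 : (fun ω'' : Traj mx my ms T => gmap t ht (Vfun t ω''))
      = fun ω' => ((Xat ω' t, Sat ω' t), Cfun t ω') := by
    funext ω'
    rw [gmap_Vfun t ht ω']
  rw [hfun1, hfun2, gmap_Vfun t ht ω] at h
  exact h
lemma Cfun_succ_iff (t : ℕ) (ht : t < T) (ω₂ ω₃ : Traj mx my ms T) :
    Cfun (t + 1) ω₂ = Cfun (t + 1) ω₃
      ↔ Cfun t ω₂ = Cfun t ω₃ ∧ Yat ω₂ t = Yat ω₃ t := by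
  constructor
  · intro h3
    constructor
    · funext i
      exact congrFun h3 ⟨(i : ℕ), Nat.lt_succ_of_lt i.isLt⟩
    · exact congrFun h3 ⟨t, Nat.lt_succ_self t⟩
  · rintro ⟨h3, h4⟩
    funext i
    rcases Nat.lt_succ_iff_lt_or_eq.mp i.isLt with h' | h'
    · exact congrFun h3 ⟨(i : ℕ), h'⟩
    · simpa only [Cfun, h'] using h4

section Relabel
variable (p : Traj mx my ms T → ℝ) (ω : Traj mx my ms T)

lemma pr_SX_eq : pr p (fun ω' => (ω'.1, ω'.2.1)) ((fun ω' : Traj mx my ms T => (ω'.1, ω'.2.1)) ω)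
    = pr p (Vfun 0) (Vfun 0 ω) := by
  refine pr_congr p _ _ ω fun ω' => ?_
  simp only [Vfun, Prod.mk.injEq]
  constructor
  · rintro ⟨h1, h2⟩
    exact ⟨h1, h2, funext fun i => i.elim0⟩
  · rintro ⟨h1, h2, _⟩
    exact ⟨h1, h2⟩

lemma y_eq_iff_Cfun (ω' : Traj mx my ms T) : ω'.2.2 = ω.2.2 ↔ Cfun T ω' = Cfun T ω := by
  constructor
  · intro h
    funext i
    simp only [Cfun]
    rw [Yat_eq _ _ i.isLt, Yat_eq _ _ i.isLt, h]
  · intro h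
    funext i
    have h2 := congrFun h ⟨(i : ℕ), i.isLt⟩
    simp only [Cfun] at h2
    rw [Yat_eq _ _ i.isLt, Yat_eq _ _ i.isLt] at h2
    exact Fin.ext (by exact_mod_cast h2)

lemma pr_SXY_eq :
    pr p (fun ω' => ((ω'.1, ω'.2.1), ω'.2.2))
      ((fun ω' : Traj mx my ms T => ((ω'.1, ω'.2.1), ω'.2.2)) ω)
    = pr p (Vfun T) (Vfun T ω) := by
  refine pr_congr p _ _ ω fun ω' => ?_
  simp only [Vfun, Prod.mk.injEq]
  rw [and_assoc]
  refine and_congr Iff.rfl (and_congr Iff.rfl ?_)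
  exact y_eq_iff_Cfun ω ω'

lemma pr_Y_eq : pr p (fun ω' => ω'.2.2) ((fun ω' : Traj mx my ms T => ω'.2.2) ω)
    = pr p (Cfun T) (Cfun T ω) := by
  refine pr_congr p _ _ ω fun ω' => ?_
  exact y_eq_iff_Cfun ω ω'

lemma pr_YC_eq (t : ℕ) (ht : t < T) :
    pr p (fun ω' => (Yat ω' t, Cfun t ω'))
      ((fun ω' : Traj mx my ms T => (Yat ω' t, Cfun t ω')) ω)
    = pr p (Cfun (t + 1)) (Cfun (t + 1) ω) := by
  refine pr_congr p _ _ ω fun ω' => ?_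
  rw [Prod.mk.injEq, Cfun_succ_iff t ht, and_comm]

lemma pr_AZC_eq (t : ℕ) :
    pr p (fun ω' => ((Xat ω' t, Sat ω' t), Yat ω' t, Cfun t ω'))
      ((fun ω' : Traj mx my ms T => ((Xat ω' t, Sat ω' t), Yat ω' t, Cfun t ω')) ω)
    = pr p (fun ω' => (((Xat ω' t, Sat ω' t), Cfun t ω'), Yat ω' t))
        (((Xat ω t, Sat ω t), Cfun t ω), Yat ω t) := by
  refine pr_congr p _ _ ω fun ω' => ?_
  simp only [Prod.mk.injEq]
  tauto

lemma pr_C0_total (ω : Traj mx my ms T) :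
    pr p (Cfun 0) (Cfun 0 ω) = ∑ ω' : Traj mx my ms T, p ω' := by
  rw [pr]
  congr 1
  apply Finset.filter_true_of_mem
  intro ω' _
  funext i
  exact i.elim0

end Relabel
theorem leakage_eq_sum_condMutInfo_QB' (PX1 : Fin (mx + 1) → ℝ) (hPX1 : IsPMF PX1)
    (Qm : Fin (mx + 1) → Fin (mx + 1) → ℝ) (hQm : ∀ x, IsPMF (Qm x))
    (PS1 : Fin (ms + 1) → ℝ) (hPS1 : IsPMF PS1)
    (q : PolicyB mx my ms) (hq : CondPMFB q) :
    mutInfo (jointBMarkov PS1 PX1 Qm q T) (fun ω => (ω.1, ω.2.1)) (fun ω => ω.2.2)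
      = ∑ t ∈ Finset.range T,
          condMutInfo (jointBMarkov PS1 PX1 Qm q T)
            (fun ω => (Xat ω t, Sat ω t)) (fun ω => Yat ω t)
            (fun ω => Cfun t ω) := by
  classical
  set p := jointBMarkov PS1 PX1 Qm q T with hp
  have hpnn : ∀ ω, 0 ≤ p ω := by
    intro ω
    rw [hp, jointBMarkov_eq]
    refine mul_nonneg (mul_nonneg (hPS1.1 _) ?_)
      (Finset.prod_nonneg fun i _ => (hq _ _ _ _).1 _)
    unfold markovWt
    refine Finset.prod_nonneg fun i _ => ?_
    by_cases h0 : (i : ℕ) = 0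
    · rw [dif_pos h0]; exact hPX1.1 _
    · rw [dif_neg h0]; exact (hQm _).1 _
  have htot : ∑ ω' : Traj mx my ms T, p ω' = 1 :=
    jointBMarkov_total PS1 hPS1 PX1 hPX1 Qm hQm q hq
  -- abbreviations
  set L : ℕ → Traj mx my ms T → ℝ :=
    fun t ω => Real.logb 2 (pr p (Vfun t) (Vfun t ω)) with hL
  set M : ℕ → Traj mx my ms T → ℝ :=
    fun t ω => Real.logb 2 (pr p (Cfun t) (Cfun t ω)) with hM
  -- left side
  have EL : mutInfo p (fun ω => (ω.1, ω.2.1)) (fun ω => ω.2.2)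
      = ∑ ω, p ω * (L T ω - L 0 ω - M T ω) := by
    rw [mutInfo]
    simp only [ent_eq_sum]
    simp only [pr_SX_eq p, pr_Y_eq p, pr_SXY_eq p]
    have h1 : ∑ ω, p ω * (L T ω - L 0 ω - M T ω)
        = (∑ ω, p ω * L T ω) - (∑ ω, p ω * L 0 ω) - (∑ ω, p ω * M T ω) := by
      rw [← Finset.sum_sub_distrib, ← Finset.sum_sub_distrib]
      exact Finset.sum_congr rfl fun ω _ => by ring
    rw [h1, hL, hM]
    ring
  -- right side
  have ER : ∑ t ∈ Finset.range T,
        condMutInfo p (fun ω => (Xat ω t, Sat ω t)) (fun ω => Yat ω t) (fun ω => Cfun t ω)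
      = ∑ ω, p ω * ∑ t ∈ Finset.range T,
          (Real.logb 2 (pr p (fun ω' => ((Xat ω' t, Sat ω' t), Yat ω' t, Cfun t ω'))
              ((Xat ω t, Sat ω t), Yat ω t, Cfun t ω))
            + M t ω
            - Real.logb 2 (pr p (fun ω' => ((Xat ω' t, Sat ω' t), Cfun t ω'))
              ((Xat ω t, Sat ω t), Cfun t ω))
            - M (t + 1) ω) := by
    calc ∑ t ∈ Finset.range T,
          condMutInfo p (fun ω => (Xat ω t, Sat ω t)) (fun ω => Yat ω t) (fun ω => Cfun t ω)
        = ∑ t ∈ Finset.range T, ∑ ω, p ω *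
            (Real.logb 2 (pr p (fun ω' => ((Xat ω' t, Sat ω' t), Yat ω' t, Cfun t ω'))
                ((Xat ω t, Sat ω t), Yat ω t, Cfun t ω))
              + M t ω
              - Real.logb 2 (pr p (fun ω' => ((Xat ω' t, Sat ω' t), Cfun t ω'))
                ((Xat ω t, Sat ω t), Cfun t ω))
              - M (t + 1) ω) := by
          refine Finset.sum_congr rfl fun t htm => ?_
          have ht : t < T := Finset.mem_range.mp htm
          rw [condMutInfo]
          simp only [ent_eq_sum]
          have hyc : ∀ ω : Traj mx my ms T,
              pr p (fun ω' => (Yat ω' t, Cfun t ω')) (Yat ω t, Cfun t ω)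
                = pr p (Cfun (t + 1)) (Cfun (t + 1) ω) := fun ω => pr_YC_eq p ω t ht
          simp only [hyc]
          have h1 : ∑ ω, p ω *
              (Real.logb 2 (pr p (fun ω' => ((Xat ω' t, Sat ω' t), Yat ω' t, Cfun t ω'))
                  ((Xat ω t, Sat ω t), Yat ω t, Cfun t ω))
                + M t ω
                - Real.logb 2 (pr p (fun ω' => ((Xat ω' t, Sat ω' t), Cfun t ω'))
                  ((Xat ω t, Sat ω t), Cfun t ω))
                - M (t + 1) ω)
              = (∑ ω, p ω * Real.logb 2
                    (pr p (fun ω' => ((Xat ω' t, Sat ω' t), Yat ω' t, Cfun t ω'))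
                    ((Xat ω t, Sat ω t), Yat ω t, Cfun t ω)))
                + (∑ ω, p ω * M t ω)
                - (∑ ω, p ω * Real.logb 2
                    (pr p (fun ω' => ((Xat ω' t, Sat ω' t), Cfun t ω'))
                    ((Xat ω t, Sat ω t), Cfun t ω)))
                - (∑ ω, p ω * M (t + 1) ω) := by
            rw [← Finset.sum_add_distrib, ← Finset.sum_sub_distrib, ← Finset.sum_sub_distrib]
            exact Finset.sum_congr rfl fun ω _ => by ring
          rw [h1, hM]
          ring
      _ = ∑ ω, ∑ t ∈ Finset.range T, p ω *
            (Real.logb 2 (pr p (fun ω' => ((Xat ω' t, Sat ω' t), Yat ω' t, Cfun t ω'))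
                ((Xat ω t, Sat ω t), Yat ω t, Cfun t ω))
              + M t ω
              - Real.logb 2 (pr p (fun ω' => ((Xat ω' t, Sat ω' t), Cfun t ω'))
                ((Xat ω t, Sat ω t), Cfun t ω))
              - M (t + 1) ω) := Finset.sum_comm
      _ = ∑ ω, p ω * ∑ t ∈ Finset.range T,
            (Real.logb 2 (pr p (fun ω' => ((Xat ω' t, Sat ω' t), Yat ω' t, Cfun t ω'))
                ((Xat ω t, Sat ω t), Yat ω t, Cfun t ω))
              + M t ω
              - Real.logb 2 (pr p (fun ω' => ((Xat ω' t, Sat ω' t), Cfun t ω'))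
                ((Xat ω t, Sat ω t), Cfun t ω))
              - M (t + 1) ω) :=
          Finset.sum_congr rfl fun ω _ => (Finset.mul_sum _ _ _).symm
  rw [EL, ER]
  refine Finset.sum_congr rfl fun ω _ => ?_
  by_cases hω : p ω = 0
  · rw [hω, zero_mul, zero_mul]
  refine congrArg (fun r => p ω * r) ?_
  -- pointwise identity on the support
  have hqpos : ∀ (t : ℕ) (ht : t < T), 0 < qterm q ⟨t, ht⟩ ω := by
    intro t ht
    have h1 := F1step PS1 PX1 Qm q hq t ht ω
    have h2 : 0 < pr p (Vfun (t + 1)) (Vfun (t + 1) ω) := pr_pos p hpnn _ ω hω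
    have h0 : 0 ≤ qterm q ⟨t, ht⟩ ω := (hq _ _ _ _).1 _
    rcases lt_or_eq_of_le h0 with h | h
    · exact h
    · exfalso
      rw [h1, ← h, mul_zero] at h2
      exact lt_irrefl _ h2
  have hstepL : ∀ (t : ℕ) (ht : t < T),
      L (t + 1) ω = L t ω + Real.logb 2 (qterm q ⟨t, ht⟩ ω) := by
    intro t ht
    show Real.logb 2 (pr p (Vfun (t + 1)) (Vfun (t + 1) ω))
      = Real.logb 2 (pr p (Vfun t) (Vfun t ω)) + Real.logb 2 (qterm q ⟨t, ht⟩ ω)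
    rw [F1step PS1 PX1 Qm q hq t ht ω,
      Real.logb_mul (ne_of_gt (pr_pos p hpnn _ ω hω)) (ne_of_gt (hqpos t ht))]
  have hM0 : M 0 ω = 0 := by
    show Real.logb 2 (pr p (Cfun 0) (Cfun 0 ω)) = 0
    rw [pr_C0_total p ω, htot, Real.logb_one]
  have hψ : ∀ t ∈ Finset.range T,
      (Real.logb 2 (pr p (fun ω' => ((Xat ω' t, Sat ω' t), Yat ω' t, Cfun t ω'))
          ((Xat ω t, Sat ω t), Yat ω t, Cfun t ω))
        + M t ω
        - Real.logb 2 (pr p (fun ω' => ((Xat ω' t, Sat ω' t), Cfun t ω'))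
          ((Xat ω t, Sat ω t), Cfun t ω))
        - M (t + 1) ω)
      = (L (t + 1) ω - L t ω) + (M t ω - M (t + 1) ω) := by
    intro t htm
    have ht : t < T := Finset.mem_range.mp htm
    have hAC : 0 < pr p (fun ω' => ((Xat ω' t, Sat ω' t), Cfun t ω'))
        ((Xat ω t, Sat ω t), Cfun t ω) := pr_pos p hpnn _ ω hω
    have hrew : Real.logb 2 (pr p (fun ω' => ((Xat ω' t, Sat ω' t), Yat ω' t, Cfun t ω'))
          ((Xat ω t, Sat ω t), Yat ω t, Cfun t ω))
        = Real.logb 2 (pr p (fun ω' => ((Xat ω' t, Sat ω' t), Cfun t ω'))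
            ((Xat ω t, Sat ω t), Cfun t ω)) + Real.logb 2 (qterm q ⟨t, ht⟩ ω) := by
      rw [pr_AZC_eq p ω t, F2 PS1 PX1 Qm q hq t ht ω,
        Real.logb_mul (ne_of_gt hAC) (ne_of_gt (hqpos t ht))]
    rw [hrew, hstepL t ht]
    ring
  calc L T ω - L 0 ω - M T ω
      = ((L T ω - L 0 ω) + (M 0 ω - M T ω)) := by rw [hM0]; ring
    _ = (∑ t ∈ Finset.range T, (L (t + 1) ω - L t ω))
        + ∑ t ∈ Finset.range T, (M t ω - M (t + 1) ω) := by
        rw [Finset.sum_range_sub (fun t => L t ω), Finset.sum_range_sub' (fun t => M t ω)]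
    _ = ∑ t ∈ Finset.range T, ((L (t + 1) ω - L t ω) + (M t ω - M (t + 1) ω)) :=
        Finset.sum_add_distrib.symm
    _ = ∑ t ∈ Finset.range T,
          (Real.logb 2 (pr p (fun ω' => ((Xat ω' t, Sat ω' t), Yat ω' t, Cfun t ω'))
              ((Xat ω t, Sat ω t), Yat ω t, Cfun t ω))
            + M t ω
            - Real.logb 2 (pr p (fun ω' => ((Xat ω' t, Sat ω' t), Cfun t ω'))
              ((Xat ω t, Sat ω t), Cfun t ω))
            - M (t + 1) ω) := (Finset.sum_congr rfl hψ).symm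

/-- For Markov demand, an independent initial battery state, battery
dynamics `S_{t+1} = S_t + Y_t - X_t`, and any policy in the class `Q_B` (the conditional
law of `Y_t` depends only on `(X_t, S_t, Y^{t-1})`), equality holds:
`I(S₁, X^T; Y^T) = Σ_{t=1}^T I(X_t, S_t; Y_t | Y^{t-1})`. -/
theorem leakage_eq_sum_condMutInfo_QB (mx my ms T : ℕ) (hxy : mx ≤ my)
    (PX1 : Fin (mx + 1) → ℝ) (hPX1 : IsPMF PX1)
    (Qm : Fin (mx + 1) → Fin (mx + 1) → ℝ) (hQm : ∀ x, IsPMF (Qm x))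
    (PS1 : Fin (ms + 1) → ℝ) (hPS1 : IsPMF PS1)
    (q : PolicyB mx my ms) (hq : CondPMFB q) :
    mutInfo (jointBMarkov PS1 PX1 Qm q T) (fun ω => (ω.1, ω.2.1)) (fun ω => ω.2.2)
      = ∑ t ∈ Finset.range T,
          condMutInfo (jointBMarkov PS1 PX1 Qm q T)
            (fun ω => (Xat ω t, Sat ω t)) (fun ω => Yat ω t)
            (fun ω => fun i : Fin t => Yat ω (i : ℕ)) := by
  exact leakage_eq_sum_condMutInfo_QB' PX1 hPX1 Qm hQm PS1 hPS1 q hq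
end SmartMeter
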